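/- Let M be a von Neumann algebra on a complex Hilbert space H, and let p, q ∈ M be projections such that p is sub-equivalent to q in M and q is sub-equivalent to p in M. Then p and q are Murray–von Neumann equivalent in M: there exists u ∈ M with u* u = p and u u* = q. -/

import Mathlib

open Filter Topology Finset

noncomputable section MvNAux

variable {H : Type*} [NormedAddCommGroup H] [InnerProductSpace ℂ H] [CompleteSpace H]

local notation "⟪" x ", " y "⟫" => @inner ℂ _ _ x y

/-- If `star a * a = r` with `r` a selfadjoint idempotent, then `a * r = a`. -/
lemma mvn_aux_mul_eq_self {a r : H →L[ℂ] H} (hr_sa : IsSelfAdjoint r) (hr : r * r = r)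
    (ha : star a * a = r) : a * r = a := by
  have key : star (a * r - a) * (a * r - a) = 0 := by
    have expand : star (a * r - a) * (a * r - a)
        = r * (star a * a) * r - r * (star a * a) - (star a * a) * r + star a * a := by
      simp only [star_sub, star_mul, hr_sa.star_eq]
      noncomm_ring
    rw [expand, ha, hr, hr]
    abel
  have := (CStarRing.star_mul_self_eq_zero_iff (a * r - a)).mp key
  exact sub_eq_zero.mp this

lemma mvn_aux_normsq {r : H →L[ℂ] H} (hsa : IsSelfAdjoint r) (hr : r * r = r) (x : H) :
    ‖r x‖ ^ 2 = RCLike.re ⟪r x, x⟫ := by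
  have hsym := ContinuousLinearMap.isSelfAdjoint_iff_isSymmetric.mp hsa
  have h1 : ⟪r x, r x⟫ = ⟪r x, x⟫ := by
    have := hsym (r x) x
    calc ⟪r x, r x⟫ = ⟪r (r x), x⟫ := (hsym (r x) x).symm
      _ = ⟪(r * r) x, x⟫ := rfl
      _ = ⟪r x, x⟫ := by rw [hr]
  rw [← inner_self_eq_norm_sq (𝕜 := ℂ), h1]

lemma mvn_aux_norm_le {r : H →L[ℂ] H} (hsa : IsSelfAdjoint r) (hr : r * r = r) (x : H) :
    ‖r x‖ ≤ ‖x‖ := by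
  have h := mvn_aux_normsq hsa hr x
  have h2 : RCLike.re ⟪r x, x⟫ ≤ ‖r x‖ * ‖x‖ := by
    calc RCLike.re ⟪r x, x⟫ ≤ ‖(⟪r x, x⟫ : ℂ)‖ := RCLike.re_le_norm _
      _ ≤ ‖r x‖ * ‖x‖ := norm_inner_le_norm _ _
  rcases eq_or_lt_of_le (norm_nonneg (r x)) with h0 | h0
  · rw [← h0]; exact norm_nonneg x
  · have : ‖r x‖ * ‖r x‖ ≤ ‖r x‖ * ‖x‖ := by rw [← sq]; exact h ▸ h2
    exact le_of_mul_le_mul_left this h0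

/-- SOT-convergence of sums of pairwise orthogonal selfadjoint projections. -/
lemma mvn_aux_exists_limit (T : ℕ → H →L[ℂ] H) (hsa : ∀ n, IsSelfAdjoint (T n))
    (horth : ∀ m n, T m * T n = if m = n then T m else 0) :
    ∃ e : H →L[ℂ] H,
      ∀ x, Tendsto (fun n => (∑ k ∈ Finset.range n, T k) x) atTop (𝓝 (e x)) := by
  set s : ℕ → H →L[ℂ] H := fun n => ∑ k ∈ Finset.range n, T k with hs
  have hFsa : ∀ F : Finset ℕ, IsSelfAdjoint (∑ k ∈ F, T k) := by
    intro F
    rw [IsSelfAdjoint, star_sum]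
    exact Finset.sum_congr rfl fun k _ => (hsa k).star_eq
  have hF : ∀ F : Finset ℕ, (∑ k ∈ F, T k) * (∑ j ∈ F, T j) = ∑ k ∈ F, T k := by
    intro F
    rw [Finset.sum_mul_sum]
    refine Finset.sum_congr rfl fun i hi => ?_
    rw [Finset.sum_congr rfl fun j (_ : j ∈ F) => horth i j]
    simp [Finset.sum_ite_eq, hi]
  have hFF : ∀ (F G : Finset ℕ), F ⊆ G → (∑ k ∈ G, T k) * (∑ j ∈ F, T j) = ∑ j ∈ F, T j := by
    intro F G hFG
    rw [Finset.sum_mul_sum, Finset.sum_comm]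
    refine Finset.sum_congr rfl fun j hj => ?_
    rw [Finset.sum_congr rfl fun i (_ : i ∈ G) => horth i j]
    simp [Finset.sum_ite_eq', hFG hj]
  have hnorm : ∀ (F : Finset ℕ) (x : H), ‖(∑ k ∈ F, T k) x‖ ≤ ‖x‖ :=
    fun F x => mvn_aux_norm_le (hFsa F) (hF F) x
  -- Cauchy at each point
  have hdiff : ∀ m n, m ≤ n → s n - s m = ∑ k ∈ Finset.Ico m n, T k := by
    intro m n h
    rw [Finset.sum_Ico_eq_sub _ h]
  have hpyth : ∀ (x : H) (m n : ℕ), m ≤ n →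
      ‖s n x‖ ^ 2 = ‖s m x‖ ^ 2 + ‖s n x - s m x‖ ^ 2 := by
    intro x m n h
    have hd := hdiff m n h
    have horth2 : ⟪s m x, (s n - s m) x⟫ = 0 := by
      have hsm : (s m) * (s n - s m) = 0 := by
        rw [hd, hs]
        simp only
        rw [Finset.sum_mul_sum]
        refine Finset.sum_eq_zero fun i hi => Finset.sum_eq_zero fun j hj => ?_
        rw [horth i j, if_neg]
        simp only [Finset.mem_range] at hi
        simp only [Finset.mem_Ico] at hj
        omega
      have hsym := ContinuousLinearMap.isSelfAdjoint_iff_isSymmetric.mp (hFsa (range m))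
      calc ⟪s m x, (s n - s m) x⟫ = ⟪x, s m ((s n - s m) x)⟫ := hsym x _
        _ = ⟪x, (s m * (s n - s m)) x⟫ := rfl
        _ = 0 := by rw [hsm]; simp
    have hx : s n x = s m x + (s n - s m) x := by simp
    have hx2 : (s n - s m) x = s n x - s m x := by simp
    have := norm_add_sq_eq_norm_sq_add_norm_sq_of_inner_eq_zero _ _ horth2
    rw [← hx, hx2] at this
    nlinarith [this]
  have hcs : ∀ x, CauchySeq fun n => s n x := by
    intro x
    have hmono : Monotone fun n => ‖s n x‖ ^ 2 := by
      intro m n h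
      show ‖s m x‖ ^ 2 ≤ ‖s n x‖ ^ 2
      nlinarith [hpyth x m n h, sq_nonneg ‖s n x - s m x‖]
    have hbdd : ∀ n, ‖s n x‖ ^ 2 ≤ ‖x‖ ^ 2 := fun n => by
      have := hnorm (range n) x
      nlinarith [norm_nonneg (s n x), norm_nonneg x]
    have hconv : Tendsto (fun n => ‖s n x‖ ^ 2) atTop (𝓝 (⨆ n, ‖s n x‖ ^ 2)) :=
      tendsto_atTop_ciSup hmono ⟨‖x‖ ^ 2, by rintro _ ⟨n, rfl⟩; exact hbdd n⟩
    have hca : CauchySeq fun n => ‖s n x‖ ^ 2 := hconv.cauchySeq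
    rw [Metric.cauchySeq_iff] at hca ⊢
    intro ε hε
    obtain ⟨N, hN⟩ := hca (ε ^ 2) (by positivity)
    refine ⟨N, fun m hm n hn => ?_⟩
    have key : ∀ a b, N ≤ a → N ≤ b → b ≤ a → dist (s a x) (s b x) < ε := by
      intro a b ha hb hba
      have h1 := hN a ha b hb
      rw [Real.dist_eq] at h1
      have hsq : ‖s a x - s b x‖ ^ 2 = ‖s a x‖ ^ 2 - ‖s b x‖ ^ 2 := by
        have key2 := hpyth x b a hba
        linarith
      have h2 : ‖s a x - s b x‖ ^ 2 < ε ^ 2 := by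
        rw [hsq]
        calc ‖s a x‖ ^ 2 - ‖s b x‖ ^ 2 ≤ |‖s a x‖ ^ 2 - ‖s b x‖ ^ 2| := le_abs_self _
          _ < ε ^ 2 := h1
      rw [dist_eq_norm]
      exact lt_of_pow_lt_pow_left₀ 2 (le_of_lt hε) h2
    rcases le_total n m with h | h
    · exact key m n hm hn h
    · rw [dist_comm]; exact key n m hn hm h
  choose g hg using fun x => cauchySeq_tendsto_of_complete (hcs x)
  have hbddrange : Bornology.IsBounded (Set.range s) := by
    rw [Metric.isBounded_iff_subset_closedBall 0]
    refine ⟨1, ?_⟩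
    rintro _ ⟨n, rfl⟩
    rw [Metric.mem_closedBall, dist_zero_right]
    exact ContinuousLinearMap.opNorm_le_bound _ zero_le_one
      (fun x => by rw [one_mul]; exact hnorm (range n) x)
  refine ⟨ContinuousLinearMap.ofTendstoOfBoundedRange g s (tendsto_pi_nhds.mpr hg) hbddrange,
    fun x => ?_⟩
  rw [ContinuousLinearMap.ofTendstoOfBoundedRange_apply]
  exact hg x

end MvNAux

/-- In a von Neumann algebra `M` on a complex Hilbert space, if two projections `p, q ∈ M`
are mutually sub-equivalent (each is Murray–von Neumann equivalent in `M` to a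
subprojection of the other), then `p` and `q` are Murray–von Neumann equivalent in `M`. -/
theorem murrayVonNeumann_equiv_of_subequiv_of_subequiv
    {H : Type*} [NormedAddCommGroup H] [InnerProductSpace ℂ H] [CompleteSpace H]
    (M : VonNeumannAlgebra H) (p q : H →L[ℂ] H)
    (hpM : p ∈ M) (hqM : q ∈ M)
    (hp_sa : IsSelfAdjoint p) (hp_idem : IsIdempotentElem p)
    (hq_sa : IsSelfAdjoint q) (hq_idem : IsIdempotentElem q)
    (hpq : ∃ v ∈ M, star v * v = p ∧ q * (v * star v) = v * star v)
    (hqp : ∃ w ∈ M, star w * w = q ∧ p * (w * star w) = w * star w) :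
    ∃ u ∈ M, star u * u = p ∧ u * star u = q := by
  classical
  obtain ⟨v, hvM, hv, hvq⟩ := hpq
  obtain ⟨w, hwM, hw, hwp⟩ := hqp
  have hpp : p * p = p := hp_idem
  have hqq : q * q = q := hq_idem
  -- basic partial isometry identities
  have hvp : v * p = v := mvn_aux_mul_eq_self hp_sa hpp hv
  have hwq : w * q = w := mvn_aux_mul_eq_self hq_sa hqq hw
  have hpv' : p * star v = star v := by
    have := congrArg star hvp
    rwa [star_mul, hp_sa.star_eq] at this
  have hqv : q * v = v := by
    calc q * v = q * (v * (star v * v)) := by rw [hv, hvp]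
      _ = (q * (v * star v)) * v := by noncomm_ring
      _ = (v * star v) * v := by rw [hvq]
      _ = v * (star v * v) := by rw [mul_assoc]
      _ = v := by rw [hv, hvp]
  have hvq' : star v * q = star v := by
    have := congrArg star hqv
    rwa [star_mul, hq_sa.star_eq] at this
  have hpw : p * w = w := by
    calc p * w = p * (w * (star w * w)) := by rw [hw, hwq]
      _ = (p * (w * star w)) * w := by noncomm_ring
      _ = (w * star w) * w := by rw [hwp]
      _ = w * (star w * w) := by rw [mul_assoc]
      _ = w := by rw [hw, hwq]
  have hwp' : star w * p = star w := by
    have := congrArg star hpw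
    rwa [star_mul, hp_sa.star_eq] at this
  set z : H →L[ℂ] H := w * v with hz_def
  set ww : H →L[ℂ] H := w * star w with hww_def
  have hzM : z ∈ M := mul_mem hwM hvM
  have hwwM : ww ∈ M := mul_mem hwM (star_mem hwM)
  have hz : star z * z = p := by
    rw [hz_def, star_mul]
    calc star v * star w * (w * v) = star v * ((star w * w) * v) := by noncomm_ring
      _ = star v * (q * v) := by rw [hw]
      _ = star v * v := by rw [hqv]
      _ = p := hv
  have hpz : p * z = z := by rw [hz_def, ← mul_assoc, hpw]
  have hzp : z * p = z := mvn_aux_mul_eq_self hp_sa hpp hz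
  have hpz' : p * star z = star z := by
    have := congrArg star hzp
    rwa [star_mul, hp_sa.star_eq] at this
  have hww_sa : IsSelfAdjoint ww := by
    rw [IsSelfAdjoint, hww_def, star_mul, star_star]
  have hww : ww * ww = ww := by
    rw [hww_def]
    calc w * star w * (w * star w) = w * ((star w * w) * star w) := by noncomm_ring
      _ = w * (q * star w) := by rw [hw]
      _ = w * star w := by
          congr 1
          have := congrArg star hwq
          rwa [star_mul, hq_sa.star_eq] at this
  have hwwp : ww * p = ww := by
    have := congrArg star hwp
    rwa [star_mul, star_mul, star_star, hp_sa.star_eq] at this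
  have hwwz : ww * z = z := by
    rw [hww_def, hz_def]
    calc w * star w * (w * v) = w * ((star w * w) * v) := by noncomm_ring
      _ = w * (q * v) := by rw [hw]
      _ = w * v := by rw [hqv]
  -- the base projection e₀ and the sequence T
  set e₀ : H →L[ℂ] H := p - ww with he₀_def
  have he₀M : e₀ ∈ M := sub_mem hpM hwwM
  have he₀_sa : IsSelfAdjoint e₀ := hp_sa.sub hww_sa
  have he₀ : e₀ * e₀ = e₀ := by
    rw [he₀_def, sub_mul, mul_sub, mul_sub, hpp, hwp, hwwp, hww]
    abel
  have hpe₀ : p * e₀ = e₀ := by rw [he₀_def, mul_sub, hpp, hwp]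
  have he₀p : e₀ * p = e₀ := by rw [he₀_def, sub_mul, hpp, hwwp]
  have he₀z : e₀ * z = 0 := by rw [he₀_def, sub_mul, hpz, hwwz, sub_self]
  have hwwe₀ : ww * e₀ = 0 := by rw [he₀_def, mul_sub, hwwp, hww, sub_self]
  set T : ℕ → H →L[ℂ] H := fun n => z ^ n * e₀ * (star z) ^ n with hT_def
  have hT0 : T 0 = e₀ := by simp [hT_def]
  have hTsucc : ∀ n, T (n + 1) = z * T n * star z := by
    intro n
    show z ^ (n + 1) * e₀ * (star z) ^ (n + 1) = z * (z ^ n * e₀ * (star z) ^ n) * star z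
    rw [pow_succ' z n, pow_succ (star z) n]
    noncomm_ring
  have hT_sa : ∀ n, IsSelfAdjoint (T n) := by
    intro n
    induction n with
    | zero => rw [hT0]; exact he₀_sa
    | succ n ih =>
      rw [hTsucc n, IsSelfAdjoint]
      simp only [star_mul, star_star, ih.star_eq, mul_assoc]
  have hpT : ∀ n, p * T n = T n := by
    intro n
    cases n with
    | zero => rw [hT0]; exact hpe₀
    | succ n => rw [hTsucc n, ← mul_assoc, ← mul_assoc, hpz]
  have hTp : ∀ n, T n * p = T n := by
    intro n
    have := congrArg star (hpT n)
    rwa [star_mul, hp_sa.star_eq, (hT_sa n).star_eq] at this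
  have hTT : ∀ n, T n * T n = T n := by
    intro n
    induction n with
    | zero => rw [hT0]; exact he₀
    | succ n ih =>
      rw [hTsucc n]
      calc z * T n * star z * (z * T n * star z)
          = z * ((T n * (star z * z)) * T n) * star z := by noncomm_ring
        _ = z * ((T n * p) * T n) * star z := by rw [hz]
        _ = z * (T n * T n) * star z := by rw [hTp]
        _ = z * T n * star z := by rw [ih]
  have he₀T : ∀ k, e₀ * T (k + 1) = 0 := by
    intro k
    rw [hTsucc k, ← mul_assoc, ← mul_assoc, he₀z, zero_mul, zero_mul]
  have hgap : ∀ m k, T m * T (m + k + 1) = 0 := by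
    intro m
    induction m with
    | zero => intro k; rw [hT0]; simpa using he₀T k
    | succ m ih =>
      intro k
      have hidx : m + 1 + k + 1 = (m + k + 1) + 1 := by omega
      rw [hidx, hTsucc m, hTsucc (m + k + 1)]
      calc z * T m * star z * (z * T (m + k + 1) * star z)
          = z * ((T m * (star z * z)) * T (m + k + 1)) * star z := by noncomm_ring
        _ = z * ((T m * p) * T (m + k + 1)) * star z := by rw [hz]
        _ = z * (T m * T (m + k + 1)) * star z := by rw [hTp]
        _ = 0 := by rw [ih k, mul_zero, zero_mul]
  have horth : ∀ m n, T m * T n = if m = n then T m else 0 := by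
    intro m n
    rcases lt_trichotomy m n with h | h | h
    · rw [if_neg (Nat.ne_of_lt h)]
      obtain ⟨k, rfl⟩ : ∃ k, n = m + k + 1 := ⟨n - m - 1, by omega⟩
      exact hgap m k
    · rw [if_pos h, h, hTT]
    · rw [if_neg (Nat.ne_of_gt h)]
      obtain ⟨k, rfl⟩ : ∃ k, m = n + k + 1 := ⟨m - n - 1, by omega⟩
      have := congrArg star (hgap n k)
      rwa [star_mul, (hT_sa n).star_eq, (hT_sa (n + k + 1)).star_eq, star_zero] at this
  have hTM : ∀ n, T n ∈ M := by
    intro n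
    induction n with
    | zero => rw [hT0]; exact he₀M
    | succ n ih => rw [hTsucc n]; exact mul_mem (mul_mem hzM ih) (star_mem hzM)
  have hwwT : ∀ k, ww * T (k + 1) = T (k + 1) := by
    intro k
    rw [hTsucc k, ← mul_assoc, ← mul_assoc, hwwz]
  have hwwT0 : ww * T 0 = 0 := by rw [hT0]; exact hwwe₀
  have hzT : ∀ k, T (k + 1) * (z * T k) = z * T k := by
    intro k
    rw [hTsucc k]
    calc z * T k * star z * (z * T k) = z * ((T k * (star z * z)) * T k) := by noncomm_ring
      _ = z * ((T k * p) * T k) := by rw [hz]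
      _ = z * (T k * T k) := by rw [hTp]
      _ = z * T k := by rw [hTT, ← mul_assoc]
  -- the SOT limit e of the partial sums
  obtain ⟨e, key⟩ := mvn_aux_exists_limit T hT_sa horth
  set s : ℕ → H →L[ℂ] H := fun n => ∑ k ∈ Finset.range n, T k with hs_def
  have hsM : ∀ n, s n ∈ M := fun n => sum_mem fun k _ => hTM k
  have hssa : ∀ n, IsSelfAdjoint (s n) := by
    intro n
    show star (∑ k ∈ Finset.range n, T k) = ∑ k ∈ Finset.range n, T k
    rw [star_sum]
    exact Finset.sum_congr rfl fun k _ => (hT_sa k).star_eq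
  have hps : ∀ n, p * s n = s n := by
    intro n
    show p * ∑ k ∈ Finset.range n, T k = ∑ k ∈ Finset.range n, T k
    rw [Finset.mul_sum]
    exact Finset.sum_congr rfl fun k _ => hpT k
  have hsp : ∀ n, s n * p = s n := by
    intro n
    show (∑ k ∈ Finset.range n, T k) * p = ∑ k ∈ Finset.range n, T k
    rw [Finset.sum_mul]
    exact Finset.sum_congr rfl fun k _ => hTp k
  have hsT : ∀ m j, j < m → s m * T j = T j := by
    intro m j h
    show (∑ k ∈ Finset.range m, T k) * T j = T j
    rw [Finset.sum_mul]
    rw [Finset.sum_congr rfl fun i (_ : i ∈ range m) => horth i j]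
    rw [Finset.sum_ite_eq' (range m) j T]
    simp [h]
  have hzsz : ∀ n, z * s n * star z = s (n + 1) - T 0 := by
    intro n
    show z * (∑ k ∈ Finset.range n, T k) * star z
        = (∑ k ∈ Finset.range (n + 1), T k) - T 0
    rw [Finset.mul_sum, Finset.sum_mul]
    rw [Finset.sum_range_succ' T n]
    have : ∀ k, z * T k * star z = T (k + 1) := fun k => (hTsucc k).symm
    rw [Finset.sum_congr rfl fun k _ => this k]
    abel
  have hwws : ∀ n, ww * s (n + 1) = s (n + 1) - T 0 := by
    intro n
    show ww * ∑ k ∈ Finset.range (n + 1), T k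
        = (∑ k ∈ Finset.range (n + 1), T k) - T 0
    rw [Finset.mul_sum]
    rw [Finset.sum_range_succ' (fun k => ww * T k) n, Finset.sum_range_succ' T n]
    rw [Finset.sum_congr rfl fun k (_ : k ∈ range n) => hwwT k, hwwT0]
    abel
  -- properties of e via limits
  have heM : e ∈ M := by
    have hmem : e ∈ M.commutant.commutant := by
      rw [VonNeumannAlgebra.mem_commutant_iff]
      intro g hg
      ext x
      show g (e x) = e (g x)
      have hgc : ∀ n, g * s n = s n * g := fun n =>
        ((VonNeumannAlgebra.mem_commutant_iff.mp hg) (s n) (hsM n)).symm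
      have h1 : Tendsto (fun n => g (s n x)) atTop (𝓝 (g (e x))) :=
        (g.continuous.tendsto _).comp (key x)
      have h2 : Tendsto (fun n => g (s n x)) atTop (𝓝 (e (g x))) := by
        refine (key (g x)).congr fun n => ?_
        calc s n (g x) = (s n * g) x := rfl
          _ = (g * s n) x := by rw [hgc n]
          _ = g (s n x) := rfl
      exact tendsto_nhds_unique h1 h2
    rwa [VonNeumannAlgebra.commutant_commutant] at hmem
  have hpe : p * e = e := by
    ext x
    show p (e x) = e x
    have h1 : Tendsto (fun n => p (s n x)) atTop (𝓝 (p (e x))) :=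
      (p.continuous.tendsto _).comp (key x)
    have h2 : Tendsto (fun n => p (s n x)) atTop (𝓝 (e x)) := by
      refine (key x).congr fun n => ?_
      calc s n x = (p * s n) x := by rw [hps n]
        _ = p (s n x) := rfl
    exact tendsto_nhds_unique h1 h2
  have hep : e * p = e := by
    ext x
    show e (p x) = e x
    have h1 : Tendsto (fun n => s n (p x)) atTop (𝓝 (e (p x))) := key (p x)
    have h2 : Tendsto (fun n => s n (p x)) atTop (𝓝 (e x)) := by
      refine (key x).congr fun n => ?_
      calc s n x = (s n * p) x := by rw [hsp n]
        _ = s n (p x) := rfl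
    exact tendsto_nhds_unique h1 h2
  have heT : ∀ j, e * T j = T j := by
    intro j
    ext x
    show e (T j x) = T j x
    have h1 : Tendsto (fun n => s n (T j x)) atTop (𝓝 (e (T j x))) := key (T j x)
    have h2 : (fun n => s n (T j x)) =ᶠ[atTop] fun _ => T j x := by
      refine eventually_atTop.mpr ⟨j + 1, fun n hn => ?_⟩
      calc s n (T j x) = (s n * T j) x := rfl
        _ = T j x := by rw [hsT n j (by omega)]
    have h3 : Tendsto (fun n => s n (T j x)) atTop (𝓝 (T j x)) :=
      Tendsto.congr' h2.symm tendsto_const_nhds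
    exact tendsto_nhds_unique h1 h3
  have hes : ∀ n, e * s n = s n := by
    intro n
    show e * ∑ k ∈ Finset.range n, T k = ∑ k ∈ Finset.range n, T k
    rw [Finset.mul_sum]
    exact Finset.sum_congr rfl fun k _ => heT k
  have hee : e * e = e := by
    ext x
    show e (e x) = e x
    have h1 : Tendsto (fun n => e (s n x)) atTop (𝓝 (e (e x))) :=
      (e.continuous.tendsto _).comp (key x)
    have h2 : Tendsto (fun n => e (s n x)) atTop (𝓝 (e x)) := by
      refine (key x).congr fun n => ?_
      calc s n x = (e * s n) x := by rw [hes n]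
        _ = e (s n x) := rfl
    exact tendsto_nhds_unique h1 h2
  have he_sa : IsSelfAdjoint e := by
    rw [ContinuousLinearMap.isSelfAdjoint_iff_isSymmetric]
    intro x y
    have h1 : Tendsto (fun n => (inner ℂ (s n x) y : ℂ)) atTop (𝓝 (inner ℂ (e x) y : ℂ)) :=
      (key x).inner tendsto_const_nhds
    have h2 : Tendsto (fun n => (inner ℂ x (s n y) : ℂ)) atTop (𝓝 (inner ℂ x (e y) : ℂ)) :=
      tendsto_const_nhds.inner (key y)
    have h3 : ∀ n, (inner ℂ (s n x) y : ℂ) = (inner ℂ x (s n y) : ℂ) := fun n =>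
      (ContinuousLinearMap.isSelfAdjoint_iff_isSymmetric.mp (hssa n)) x y
    exact tendsto_nhds_unique (h1.congr h3) h2
  have hwwe : ww * e = e - T 0 := by
    ext x
    show ww (e x) = e x - T 0 x
    have hkey1 : Tendsto (fun n => s (n + 1) x) atTop (𝓝 (e x)) :=
      (key x).comp (tendsto_add_atTop_nat 1)
    have h1 : Tendsto (fun n => ww (s (n + 1) x)) atTop (𝓝 (ww (e x))) :=
      (ww.continuous.tendsto _).comp hkey1
    have h2 : Tendsto (fun n => ww (s (n + 1) x)) atTop (𝓝 (e x - T 0 x)) := by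
      refine (hkey1.sub tendsto_const_nhds).congr fun n => ?_
      calc s (n + 1) x - T 0 x = (s (n + 1) - T 0) x := by simp
        _ = (ww * s (n + 1)) x := by rw [hwws n]
        _ = ww (s (n + 1) x) := rfl
    exact tendsto_nhds_unique h1 h2
  have hzez : z * e * star z = e - T 0 := by
    ext x
    show z (e ((star z) x)) = e x - T 0 x
    have hkey1 : Tendsto (fun n => s (n + 1) x) atTop (𝓝 (e x)) :=
      (key x).comp (tendsto_add_atTop_nat 1)
    have h1 : Tendsto (fun n => z (s n ((star z) x))) atTop (𝓝 (z (e ((star z) x)))) :=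
      (z.continuous.tendsto _).comp (key ((star z) x))
    have h2 : Tendsto (fun n => z (s n ((star z) x))) atTop (𝓝 (e x - T 0 x)) := by
      refine (hkey1.sub tendsto_const_nhds).congr fun n => ?_
      calc s (n + 1) x - T 0 x = (s (n + 1) - T 0) x := by simp
        _ = (z * s n * star z) x := by rw [hzsz n]
        _ = z (s n ((star z) x)) := rfl
    exact tendsto_nhds_unique h1 h2
  have hpeze : (p - e) * (z * e) = 0 := by
    have hTzero : ∀ k, (p - e) * (z * T k) = 0 := by
      intro k
      have h0 : (p - e) * T (k + 1) = 0 := by rw [sub_mul, hpT (k + 1), heT (k + 1), sub_self]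
      conv_lhs => rw [← hzT k]
      rw [← mul_assoc, h0, zero_mul]
    have hszero : ∀ n, (p - e) * (z * s n) = 0 := by
      intro n
      have : z * s n = ∑ k ∈ range n, z * T k := by
        show z * ∑ k ∈ Finset.range n, T k = ∑ k ∈ range n, z * T k
        rw [Finset.mul_sum]
      rw [this, Finset.mul_sum]
      exact Finset.sum_eq_zero fun k _ => hTzero k
    ext x
    show (p - e) (z (e x)) = 0
    have h1 : Tendsto (fun n => (p - e) (z (s n x))) atTop (𝓝 ((p - e) (z (e x)))) :=
      ((p - e).continuous.tendsto _).comp ((z.continuous.tendsto _).comp (key x))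
    have h2 : Tendsto (fun n => (p - e) (z (s n x))) atTop (𝓝 0) := by
      refine tendsto_const_nhds.congr fun n => ?_
      calc (0 : H) = ((p - e) * (z * s n)) x := by rw [hszero n]; simp
        _ = (p - e) (z (s n x)) := rfl
    exact tendsto_nhds_unique h1 h2
  -- the final partial isometry
  set u : H →L[ℂ] H := v * e + star w * (p - e) with hu_def
  have huM : u ∈ M := add_mem (mul_mem hvM heM) (mul_mem (star_mem hwM) (sub_mem hpM heM))
  have hu_star : star u = e * star v + (p - e) * w := by
    rw [hu_def, star_add, star_mul, star_mul, star_star, he_sa.star_eq,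
      star_sub, hp_sa.star_eq, he_sa.star_eq]
  have hpe_idem : (p - e) * (p - e) = p - e := by
    rw [sub_mul, mul_sub, mul_sub, hpp, hpe, hep, hee]
    abel
  have hsvw : star v * star w = star z := by rw [hz_def, star_mul]
  have hwwsub : ww * (p - e) = p - e := by
    rw [mul_sub, hwwp, hwwe, hT0, he₀_def]
    abel
  have hsubww : (p - e) * ww = p - e := by
    have := congrArg star hwwsub
    rwa [star_mul, star_sub, hp_sa.star_eq, he_sa.star_eq, hww_sa.star_eq] at this
  have hterm2 : e * star z * (p - e) = 0 := by
    have h := congrArg star hpeze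
    rwa [star_mul, star_mul, he_sa.star_eq, star_sub, hp_sa.star_eq, he_sa.star_eq,
      star_zero] at h
  refine ⟨u, huM, ?_, ?_⟩
  · -- star u * u = p
    have expand : star u * u = e * (star v * v) * e + e * (star v * star w) * (p - e)
        + (p - e) * (w * v) * e + (p - e) * (w * star w) * (p - e) := by
      rw [hu_star, hu_def]
      noncomm_ring
    rw [expand, hv, hsvw, ← hz_def, ← hww_def]
    have t1 : e * p * e = e := by rw [hep, hee]
    have t3 : (p - e) * z * e = 0 := by rw [mul_assoc]; exact hpeze
    have t4 : (p - e) * ww * (p - e) = p - e := by rw [hsubww, hpe_idem]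
    rw [t1, hterm2, t3, t4]
    abel
  · -- u * star u = q
    have hepe : e * (p - e) = 0 := by rw [mul_sub, hep, hee, sub_self]
    have hpee : (p - e) * e = 0 := by rw [sub_mul, hpe, hee, sub_self]
    have expand2 : u * star u = v * (e * e) * star v + v * (e * (p - e)) * w
        + star w * ((p - e) * e) * star v + star w * ((p - e) * (p - e)) * w := by
      rw [hu_star, hu_def]
      noncomm_ring
    rw [expand2, hee, hepe, hpee, hpe_idem]
    simp only [mul_zero, zero_mul, add_zero, zero_add]
    -- now: v * e * star v + star w * (p - e) * w = q
    have hqw' : q * star w = star w := by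
      have := congrArg star hwq
      rwa [star_mul, hq_sa.star_eq] at this
    have hwwT0' : ww = p - T 0 := by rw [hT0, he₀_def]; abel
    have hwfw : w * (v * e * star v) * star w = e - T 0 := by
      calc w * (v * e * star v) * star w = (w * v) * e * (star v * star w) := by noncomm_ring
        _ = z * e * star z := by rw [hsvw, ← hz_def]
        _ = e - T 0 := hzez
    have hqf : q * (v * e * star v) = v * e * star v := by
      rw [← mul_assoc, ← mul_assoc, hqv]
    have hfq : (v * e * star v) * q = v * e * star v := by
      rw [mul_assoc, hvq']
    have hqg : q * (star w * (p - e) * w) = star w * (p - e) * w := by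
      rw [← mul_assoc, ← mul_assoc, hqw']
    have hgq : (star w * (p - e) * w) * q = star w * (p - e) * w := by
      rw [mul_assoc, hwq]
    have hwgw : w * (star w * (p - e) * w) * star w = p - e := by
      calc w * (star w * (p - e) * w) * star w
          = (w * star w) * (p - e) * (w * star w) := by noncomm_ring
        _ = ww * (p - e) * ww := by rw [← hww_def]
        _ = (p - e) * ww := by rw [hwwsub]
        _ = p - e := hsubww
    have h1 : w * (q - v * e * star v) * star w = w * (star w * (p - e) * w) * star w := by
      rw [hwgw]
      calc w * (q - v * e * star v) * star w
          = w * q * star w - w * (v * e * star v) * star w := by noncomm_ring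
        _ = w * star w - (e - T 0) := by rw [hwfw, hwq]
        _ = ww - (e - T 0) := by rw [← hww_def]
        _ = p - e := by rw [hwwT0']; abel
    have h3 : q * (q - v * e * star v) * q = q * (star w * (p - e) * w) * q := by
      calc q * (q - v * e * star v) * q
          = (star w * w) * (q - v * e * star v) * (star w * w) := by rw [hw]
        _ = star w * (w * (q - v * e * star v) * star w) * w := by noncomm_ring
        _ = star w * (w * (star w * (p - e) * w) * star w) * w := by rw [h1]
        _ = (star w * w) * (star w * (p - e) * w) * (star w * w) := by noncomm_ring
        _ = q * (star w * (p - e) * w) * q := by rw [hw]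
    have h4 : q * (q - v * e * star v) * q = q - v * e * star v := by
      rw [mul_sub, hqq, hqf, sub_mul, hqq, hfq]
    have h5 : q * (star w * (p - e) * w) * q = star w * (p - e) * w := by
      rw [hqg, hgq]
    have hg_eq : star w * (p - e) * w = q - v * e * star v := by
      rw [← h5, ← h3, h4]
    rw [hg_eq]
    abel
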